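/- If s, v1, v2, ..., v_{ℓ−1}, t is a shortest (s,t)-path in the exchange graph G(S) of a common independent set S, then the set S' = S + v1 − v2 + v3 − ... − v_{ℓ−2} + v_{ℓ−1} (alternately adding odd-indexed and removing even-indexed vertices) is a common independent set of size |S| + 1. -/

import Mathlib

open Set

variable {α : Type*}

/-- Vertices of the exchange graph: `Sum.inl v` is an element of the ground set,
`Sum.inr false` is the source `s`, `Sum.inr true` is the sink `t`. -/
abbrev ExV (α : Type*) := α ⊕ Bool

/-- Adjacency in the exchange graph `G(S)` of the common independent set `S`. -/
def exAdj (M₁ M₂ : Matroid α) (S : Set α) : ExV α → ExV α → Prop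
  | Sum.inl u, Sum.inl v =>
      (u ∈ S ∧ v ∉ S ∧ M₁.Indep (insert v (S \ {u}))) ∨
      (u ∉ S ∧ v ∈ S ∧ M₂.Indep (insert u (S \ {v})))
  | Sum.inr false, Sum.inl v => v ∉ S ∧ M₁.Indep (insert v S)
  | Sum.inl v, Sum.inr true => v ∉ S ∧ M₂.Indep (insert v S)
  | _, _ => False

/-- `l` is an `(s,t)`-path (list of vertices) in the exchange graph `G(S)`.
Its length (number of edges) is `l.length - 1`. -/
def IsSTPath (M₁ M₂ : Matroid α) (S : Set α) (l : List (ExV α)) : Prop :=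
  l.Chain' (exAdj M₁ M₂ S) ∧ l.head? = some (Sum.inr false) ∧
    l.getLast? = some (Sum.inr true)

/-- `l` is a path from `s` to the element `v` in the exchange graph `G(S)`. -/
def IsSPathTo (M₁ M₂ : Matroid α) (S : Set α) (v : α) (l : List (ExV α)) : Prop :=
  l.Chain' (exAdj M₁ M₂ S) ∧ l.head? = some (Sum.inr false) ∧
    l.getLast? = some (Sum.inl v)

/-- `v` is at distance exactly `i` from `s` in the exchange graph `G(S)`;
i.e. `v ∈ D_i`. -/
def InLayer (M₁ M₂ : Matroid α) (S : Set α) (i : ℕ) (v : α) : Prop :=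
  (∃ l, IsSPathTo M₁ M₂ S v l ∧ l.length = i + 1) ∧
    ∀ l, IsSPathTo M₁ M₂ S v l → i + 1 ≤ l.length

/-- Shortest `(s,t)`-paths in `G(S)` have length exactly `4`. -/
def ShortestAugLenFour (M₁ M₂ : Matroid α) (S : Set α) : Prop :=
  (∃ l, IsSTPath M₁ M₂ S l ∧ l.length = 5) ∧
    ∀ l, IsSTPath M₁ M₂ S l → 5 ≤ l.length

/-- `(B₁, A₁, B₂)` is an augmenting set in `G(S)`. -/
def IsAugSet (M₁ M₂ : Matroid α) (S B₁ A₁ B₂ : Set α) : Prop :=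
  (∀ v ∈ B₁, InLayer M₁ M₂ S 1 v) ∧ (∀ v ∈ A₁, InLayer M₁ M₂ S 2 v) ∧
  (∀ v ∈ B₂, InLayer M₁ M₂ S 3 v) ∧
  B₁.ncard = A₁.ncard ∧ A₁.ncard = B₂.ncard ∧
  M₁.Indep (S ∪ B₁) ∧ M₂.Indep ((S ∪ B₁) \ A₁) ∧
  M₁.Indep ((S \ A₁) ∪ B₂) ∧ M₂.Indep (S ∪ B₂)

lemma indep_encard_le_of_subset_closure (M : Matroid α) {I X : Set α}
    (hI : M.Indep I) (hIX : I ⊆ M.closure X) : I.encard ≤ X.encard := by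
  obtain ⟨B, hB⟩ := M.exists_isBasis' X
  have hcl : I ⊆ M.closure B := by rwa [hB.closure_eq_closure]
  have hle : I.encard ≤ B.encard := by
    by_contra h
    obtain ⟨e, he, hei⟩ := hB.indep.augment hI (lt_of_not_ge h)
    have heB : e ∉ M.closure B := by
      rw [hB.indep.notMem_closure_iff_of_notMem he.2
        (hei.subset_ground (mem_insert _ _))]
      exact hei
    exact heB (hcl he.1)
  exact hle.trans (Set.encard_mono hB.subset)

lemma pair_closure (M : Matroid α) {S : Set α} (hS : M.Indep S) (hSfin : S.Finite)
    {y a b : α} (hy : y ∉ S) (ha : a ∈ S) (hb : b ∈ S) (hab : a ≠ b)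
    (h1 : y ∈ M.closure (S \ {a})) (h2 : y ∈ M.closure (S \ {b})) :
    y ∈ M.closure ((S \ {a}) \ {b}) := by
  by_contra h
  set T := (S \ {a}) \ {b} with hT
  have hyE : y ∈ M.E := M.closure_subset_ground _ h1
  have hTb : insert b T = S \ {a} := by
    rw [hT, Set.insert_diff_singleton]; exact insert_eq_of_mem ⟨hb, hab.symm⟩
  have hTa : insert a T = S \ {b} := by
    rw [hT, diff_diff_comm, Set.insert_diff_singleton]; exact insert_eq_of_mem ⟨ha, hab⟩
  have hbcl : b ∈ M.closure (insert y T) :=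
    (Matroid.closure_exchange (by rw [hTb]; exact ⟨h1, h⟩)).1
  have hacl : a ∈ M.closure (insert y T) := by
    have h' : y ∉ M.closure (insert a T \ {a}) := by
      rwa [show insert a T \ {a} = T by
        rw [insert_diff_self_of_notMem]
        rintro ⟨⟨-, h⟩, -⟩; exact h rfl]
    exact (Matroid.closure_exchange (by rw [hTa]; exact ⟨h2, by rwa [hTa] at h'⟩)).1
  have hScl : S ⊆ M.closure (insert y T) := by
    intro x hx
    by_cases hxa : x = a
    · exact hxa ▸ hacl
    by_cases hxb : x = b
    · exact hxb ▸ hbcl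
    · exact M.subset_closure _ (insert_subset_iff.2 ⟨hyE, fun z hz =>
        hS.subset_ground hz.1.1⟩) (mem_insert_of_mem _ ⟨⟨hx, hxa⟩, hxb⟩)
  have hcard : S.encard ≤ (insert y T).encard :=
    indep_encard_le_of_subset_closure M hS hScl
  have h1' : (insert y T).encard = T.encard + 1 :=
    Set.encard_insert_of_notMem (fun h => hy h.1.1)
  have h2' : T.encard + 1 = (S \ {a}).encard :=
    Set.encard_diff_singleton_add_one (show b ∈ S \ {a} from ⟨hb, hab.symm⟩)
  have h3' : (S \ {a}).encard + 1 = S.encard :=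
    Set.encard_diff_singleton_add_one ha
  have hfinT : T.encard ≠ ⊤ := by
    simp [Set.encard_ne_top_iff]
    exact (hSfin.subset (fun z hz => hz.1.1))
  rw [h1'] at hcard
  have : T.encard + 2 ≤ T.encard + 1 := by
    calc T.encard + 2 = T.encard + 1 + 1 := by ring
    _ = S.encard := by rw [h2', h3']
    _ ≤ T.encard + 1 := hcard
  have := (WithTop.add_le_add_iff_left hfinT).1 this
  exact absurd this (by norm_cast)

lemma mem_closure_diff_of_forall (M : Matroid α) (y : α) (A : Set α) (hA : A.Finite) :
    ∀ S : Set α, M.Indep S → S.Finite → A ⊆ S →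
      y ∉ S → y ∈ M.closure S → (∀ a ∈ A, y ∈ M.closure (S \ {a})) →
      y ∈ M.closure (S \ A) := by
  refine Set.Finite.induction_on (motive := fun A _ => ∀ S : Set α, M.Indep S → S.Finite → A ⊆ S →
      y ∉ S → y ∈ M.closure S → (∀ a ∈ A, y ∈ M.closure (S \ {a})) →
      y ∈ M.closure (S \ A)) A hA ?_ ?_
  · intro S hS hSfin _ hy hycl _; simpa using hycl
  · intro a A' haA' hA' IH S hS hSfin hsub hyS hycl hall
    have h1 : y ∈ M.closure (S \ {a}) := hall a (mem_insert _ _)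
    have hrw : S \ insert a A' = (S \ {a}) \ A' := by
      rw [diff_diff, singleton_union]
    rw [hrw]
    refine IH (S \ {a}) (hS.subset diff_subset) hSfin.diff
      (fun b hb => ⟨hsub (mem_insert_of_mem _ hb), fun hba => haA' (hba ▸ hb)⟩)
      (fun h => hyS h.1) h1 ?_
    intro b hbA'
    exact pair_closure M hS hSfin hyS (hsub (mem_insert _ _))
      (hsub (mem_insert_of_mem _ hbA'))
      (fun hab => haA' (hab ▸ hbA')) h1 (hall b (mem_insert_of_mem _ hbA'))

lemma keyIndep (M : Matroid α) (S : Set α) (hS : M.Indep S) (hSfin : S.Finite)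
    (k : ℕ) (e o : ℕ → α)
    (heS : ∀ i < k, e i ∈ S) (hoS : ∀ j ≤ k, o j ∉ S)
    (hoE : ∀ j ≤ k, o j ∈ M.E)
    (heinj : ∀ i < k, ∀ i' < k, e i = e i' → i = i')
    (hoinj : ∀ j ≤ k, ∀ j' ≤ k, o j = o j' → j = j')
    (h0 : M.Indep (insert (o 0) S))
    (hex : ∀ i < k, M.Indep (insert (o (i+1)) (S \ {e i})))
    (hdep : ∀ j, 1 ≤ j → j ≤ k → o j ∈ M.closure S)
    (hskip : ∀ i j, i < k → j ≤ k → i + 2 ≤ j → o j ∈ M.closure (S \ {e i})) :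
    M.Indep ((S \ {a | ∃ i < k, e i = a}) ∪ {a | ∃ j ≤ k, o j = a}) ∧
      ((S \ {a | ∃ i < k, e i = a}) ∪ {a | ∃ j ≤ k, o j = a}).encard = S.encard + 1 := by
  classical
  set X : Set α := {a | ∃ i < k, e i = a} with hX
  set O : Set α := {a | ∃ j ≤ k, o j = a} with hO
  set J : Set α := (S \ X) ∪ O with hJdef
  have hXS : X ⊆ S := by rintro a ⟨i, hi, rfl⟩; exact heS i hi
  have hOS : ∀ a ∈ O, a ∉ S := by rintro a ⟨j, hj, rfl⟩; exact hoS j hj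
  have hJE : J ⊆ M.E := by
    rintro a (⟨haS, -⟩ | ⟨j, hj, rfl⟩)
    · exact hS.subset_ground haS
    · exact hoE j hj
  have hJsub : J ⊆ M.closure J := M.subset_closure _ hJE
  -- X is contained in the closure of J
  have hXcl : ∀ d, ∀ i, i < k → k - i ≤ d → e i ∈ M.closure J := by
    intro d
    induction d with
    | zero => intro i hik h; omega
    | succ d IH =>
      intro i hik hd
      by_cases hcase : k - i ≤ d
      · exact IH i hik hcase
      -- the set T' = S minus {e 0, ..., e i}
      set T' : Set α := S \ {a | ∃ j, j ≤ i ∧ e j = a} with hT'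
      have hTT : insert (e i) T' = S \ {a | ∃ j, j < i ∧ e j = a} := by
        ext a
        simp only [mem_insert_iff, hT', mem_diff, mem_setOf_eq]
        constructor
        · rintro (rfl | ⟨haS, hno⟩)
          · exact ⟨heS i hik, fun ⟨j, hj, hje⟩ =>
              (by omega : ¬ j = i) (heinj j (by omega) i hik hje)⟩
          · exact ⟨haS, fun ⟨j, hj, hje⟩ => hno ⟨j, le_of_lt hj, hje⟩⟩
        · rintro ⟨haS, hno⟩
          by_cases h' : ∃ j, j ≤ i ∧ e j = a
          · obtain ⟨j, hj, rfl⟩ := h'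
            left
            rcases lt_or_eq_of_le hj with h'' | rfl
            · exact absurd ⟨j, h'', rfl⟩ hno
            · rfl
          · exact Or.inr ⟨haS, h'⟩
      -- o (i+1) lies in the closure of S minus the earlier e's
      have hTcl : o (i+1) ∈ M.closure (S \ {a | ∃ j, j < i ∧ e j = a}) := by
        have : {a | ∃ j, j < i ∧ e j = a} = {a | ∃ j ∈ {m | m < i}, e j = a} := by
          ext a; simp
        rw [this, show {a | ∃ j ∈ {m | m < i}, e j = a} = e '' {m | m < i} by
          ext a; simp [eq_comm]]
        refine mem_closure_diff_of_forall M _ _ ((Set.finite_Iio i).image e) S hS hSfin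
          (by rintro a ⟨j, hj, rfl⟩; exact heS j (by simp at hj; omega))
          (hoS (i+1) (by omega)) (hdep (i+1) (by omega) (by omega)) ?_
        rintro a ⟨j, hj, rfl⟩
        simp only [mem_Iio] at hj
        exact hskip j (i+1) (by omega) (by omega) (by omega)
      have hnotT' : o (i+1) ∉ M.closure T' := by
        intro hmem
        have hsub' : T' ⊆ S \ {e i} := by
          rintro a ⟨haS, hno⟩
          exact ⟨haS, fun h => hno ⟨i, le_refl i, h.symm ▸ rfl⟩⟩
        have hmem' : o (i+1) ∈ M.closure (S \ {e i}) :=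
          M.closure_subset_closure hsub' hmem
        have hind : M.Indep (S \ {e i}) := hS.subset diff_subset
        exact (hind.notMem_closure_iff_of_notMem
          (fun h => hoS (i+1) (by omega) h.1) (hoE (i+1) (by omega))).2
          (hex i hik) hmem' 
      have hexch : e i ∈ M.closure (insert (o (i+1)) T') :=
        (Matroid.closure_exchange (by rw [hTT]; exact ⟨hTcl, hnotT'⟩)).1
      -- everything in insert (o (i+1)) T' is in the closure of J
      have hsubJ : insert (o (i+1)) T' ⊆ M.closure J := by
        intro a ha
        rcases ha with rfl | ⟨haS, hno⟩
        · exact hJsub (Or.inr ⟨i+1, by omega, rfl⟩)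
        by_cases haX : a ∈ X
        · obtain ⟨j, hjk, rfl⟩ := haX
          have hji : i < j := by
            by_contra h'
            exact hno ⟨j, by omega, rfl⟩
          exact IH j hjk (by omega)
        · exact hJsub (Or.inl ⟨haS, haX⟩)
      exact M.closure_subset_closure_of_subset_closure hsubJ hexch
  have hScl : S ⊆ M.closure J := by
    intro a ha
    by_cases haX : a ∈ X
    · obtain ⟨i, hik, rfl⟩ := haX
      exact hXcl k i hik (by omega)
    · exact hJsub (Or.inl ⟨ha, haX⟩)
  -- cardinalities
  have hXfin : X.Finite := hSfin.subset hXS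
  have hOeq : O = ↑((Finset.range (k+1)).image o) := by
    ext a
    constructor
    · rintro ⟨j, hj, rfl⟩
      exact Finset.mem_coe.2 (Finset.mem_image.2 ⟨j, Finset.mem_range.2 (by omega), rfl⟩)
    · intro h
      obtain ⟨j, hj, rfl⟩ := Finset.mem_image.1 (Finset.mem_coe.1 h)
      exact ⟨j, by have := Finset.mem_range.1 hj; omega, rfl⟩
  have hXeq : X = ↑((Finset.range k).image e) := by
    ext a
    constructor
    · rintro ⟨j, hj, rfl⟩
      exact Finset.mem_coe.2 (Finset.mem_image.2 ⟨j, Finset.mem_range.2 hj, rfl⟩)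
    · intro h
      obtain ⟨j, hj, rfl⟩ := Finset.mem_image.1 (Finset.mem_coe.1 h)
      exact ⟨j, Finset.mem_range.1 hj, rfl⟩
  have hOcard : O.encard = k + 1 := by
    rw [hOeq, Set.encard_coe_eq_coe_finsetCard,
      Finset.card_image_of_injOn (fun x hx y hy hxy =>
        hoinj x (by simpa using Nat.lt_succ_iff.mp (Finset.mem_range.mp hx))
          y (by simpa using Nat.lt_succ_iff.mp (Finset.mem_range.mp hy)) hxy),
      Finset.card_range]
    push_cast; ring
  have hXcard : X.encard = k := by
    rw [hXeq, Set.encard_coe_eq_coe_finsetCard,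
      Finset.card_image_of_injOn (fun x hx y hy hxy =>
        heinj x (Finset.mem_range.mp hx) y (Finset.mem_range.mp hy) hxy),
      Finset.card_range]
  have hdisj : Disjoint (S \ X) O := by
    rw [Set.disjoint_right]
    intro a haO haS
    exact hOS a haO haS.1
  have hJcard : J.encard = S.encard + 1 := by
    have h1 : J.encard = (S \ X).encard + (k + 1) := by
      rw [hJdef, Set.encard_union_eq hdisj, hOcard]
    have h2 : (S \ X).encard + X.encard = S.encard :=
      Set.encard_diff_add_encard_of_subset hXS
    rw [h1, ← h2, hXcard]
    ring
  refine ⟨?_, hJcard⟩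
  -- final step : take a basis of J
  obtain ⟨B, hB⟩ := M.exists_isBasis' J
  have hins : M.Indep (insert (o 0) S) := h0
  have hle : (insert (o 0) S).encard ≤ B.encard := by
    refine indep_encard_le_of_subset_closure M hins ?_
    rw [hB.closure_eq_closure]
    exact insert_subset (hJsub (Or.inr ⟨0, by omega, rfl⟩)) hScl
  have hJfin : J.Finite := by
    rw [hJdef, hOeq]
    exact hSfin.diff.union (Finset.finite_toSet _)
  have hcard2 : J.encard ≤ B.encard := by
    rw [hJcard, ← Set.encard_insert_of_notMem (hoS 0 (by omega))]
    exact hle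
  have hBJ : B = J := hJfin.eq_of_subset_of_encard_le' hB.subset hcard2
  rw [← hBJ]
  exact hB.indep

section lists
variable {β : Type*}

lemma head?_aux (vs : List β) (b : ℕ) (h : b < vs.length) :
    ((vs.drop b).map (Sum.inl : β → β ⊕ Bool) ++ [Sum.inr true]).head? =
      some (Sum.inl vs[b]) := by
  rw [List.drop_eq_getElem_cons h]
  simp [List.getElem?_eq_getElem h]

lemma getLast?_aux (vs : List β) (a : ℕ) (ha : 1 ≤ a) (h : a ≤ vs.length) :
    ((Sum.inr false : β ⊕ Bool) :: (vs.take a).map Sum.inl).getLast? =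
      some (Sum.inl vs[a-1]) := by
  obtain ⟨c, rfl⟩ : ∃ c, a = c + 1 := ⟨a - 1, by omega⟩
  have hc : c < vs.length := by omega
  rw [List.take_succ, List.getElem?_eq_getElem hc]
  simp only [Option.toList_some, List.map_append, List.map_cons, List.map_nil]
  rw [← List.cons_append, List.getLast?_concat]
  simp

lemma full_get (vs : List β) (i : ℕ) (h : i < vs.length)
    (h' : i + 1 < ((Sum.inr false : β ⊕ Bool) :: (vs.map Sum.inl ++ [Sum.inr true])).length) :
    ((Sum.inr false : β ⊕ Bool) :: (vs.map Sum.inl ++ [Sum.inr true])).get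
      ⟨i + 1, h'⟩ = Sum.inl vs[i] := by
  simp only [List.get_eq_getElem, List.getElem_cons_succ]
  rw [List.getElem_append_left (by simpa using h)]
  simp

lemma full_get0 (vs : List β)
    (h' : 0 < ((Sum.inr false : β ⊕ Bool) :: (vs.map Sum.inl ++ [Sum.inr true])).length) :
    ((Sum.inr false : β ⊕ Bool) :: (vs.map Sum.inl ++ [Sum.inr true])).get
      ⟨0, h'⟩ = Sum.inr false := rfl

lemma full_get_last (vs : List β) (j : ℕ) (hj : j = vs.length + 1)
    (h' : j < ((Sum.inr false : β ⊕ Bool) :: (vs.map Sum.inl ++ [Sum.inr true])).length) :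
    ((Sum.inr false : β ⊕ Bool) :: (vs.map Sum.inl ++ [Sum.inr true])).get
      ⟨j, h'⟩ = Sum.inr true := by
  subst hj
  simp only [List.get_eq_getElem, List.getElem_cons_succ]
  rw [List.getElem_append_right (by simp)]
  simp

end lists

lemma edges_of_chain {M₁ M₂ : Matroid α} {S : Set α} {vs : List α}
    (h : List.Chain' (exAdj M₁ M₂ S) (Sum.inr false :: (vs.map Sum.inl ++ [Sum.inr true]))) :
    (∀ hn : 0 < vs.length, exAdj M₁ M₂ S (Sum.inr false) (Sum.inl vs[0])) ∧
    (∀ i, ∀ h2 : i + 1 < vs.length, exAdj M₁ M₂ S (Sum.inl vs[i]) (Sum.inl vs[i+1])) ∧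
    (∀ hn : 0 < vs.length, exAdj M₁ M₂ S (Sum.inl vs[vs.length - 1]) (Sum.inr true)) := by
  replace h : ∀ (i : ℕ) (hi : i < (Sum.inr false :: (vs.map Sum.inl ++ [Sum.inr true]) : List (ExV α)).length - 1),
    exAdj M₁ M₂ S
      ((Sum.inr false :: (vs.map Sum.inl ++ [Sum.inr true]) : List (ExV α)).get ⟨i, by omega⟩)
      ((Sum.inr false :: (vs.map Sum.inl ++ [Sum.inr true]) : List (ExV α)).get ⟨i+1, by omega⟩) :=
    fun i hi => List.isChain_iff_getElem.1 h i (by omega)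
  have hlen : (Sum.inr false :: (vs.map Sum.inl ++ [Sum.inr true]) : List (ExV α)).length
      = vs.length + 2 := by simp
  refine ⟨?_, ?_, ?_⟩
  · intro hn
    have := h 0 (by simp only [List.length_cons, List.length_append, List.length_map, List.length_singleton]; omega)
    rwa [full_get0, full_get vs 0 hn] at this
  · intro i h2
    have := h (i+1) (by simp only [List.length_cons, List.length_append, List.length_map, List.length_singleton]; omega)
    rwa [full_get vs i (by omega), full_get vs (i+1) h2] at this
  · intro hn
    have := h (vs.length - 1 + 1) (by simp only [List.length_cons, List.length_append, List.length_map, List.length_singleton]; omega)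
    rwa [full_get vs (vs.length - 1) (by omega),
      full_get_last vs (vs.length - 1 + 1 + 1) (by omega)] at this

lemma shortcut_le {M₁ M₂ : Matroid α} {S : Set α} {vs : List α}
    (hshort : ∀ l : List (ExV α), IsSTPath M₁ M₂ S l → vs.length + 2 ≤ l.length)
    (hchain : List.Chain' (exAdj M₁ M₂ S)
      (Sum.inr false :: (vs.map Sum.inl ++ [Sum.inr true])))
    {a b : ℕ} (ha : a ≤ vs.length) (hb : b ≤ vs.length)
    (hbridge : ∀ x ∈ ((Sum.inr false : ExV α) :: (vs.take a).map Sum.inl).getLast?,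
      ∀ y ∈ ((vs.drop b).map (Sum.inl : α → ExV α) ++ [Sum.inr true]).head?,
        exAdj M₁ M₂ S x y) : b ≤ a := by
  set L : List (ExV α) := (Sum.inr false :: (vs.take a).map Sum.inl) ++
    ((vs.drop b).map Sum.inl ++ [Sum.inr true]) with hL
  have hpre : (Sum.inr false :: (vs.take a).map Sum.inl : List (ExV α)) =
      (Sum.inr false :: (vs.map Sum.inl ++ [Sum.inr true])).take (a+1) := by
    rw [List.take_succ_cons, List.take_append_of_le_length (by simpa using ha),
      List.map_take]
  have hsuf : ((vs.drop b).map Sum.inl ++ [Sum.inr true] : List (ExV α)) =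
      (Sum.inr false :: (vs.map Sum.inl ++ [Sum.inr true])).drop (b+1) := by
    rw [List.drop_succ_cons, List.drop_append_of_le_length (by simpa using hb),
      List.map_drop]
  have hchain1 : List.Chain' (exAdj M₁ M₂ S)
      (Sum.inr false :: (vs.take a).map Sum.inl) := by
    rw [hpre]; exact hchain.prefix (List.take_prefix _ _)
  have hchain2 : List.Chain' (exAdj M₁ M₂ S)
      ((vs.drop b).map Sum.inl ++ [Sum.inr true]) := by
    rw [hsuf]; exact hchain.suffix (List.drop_suffix _ _)
  have hLpath : IsSTPath M₁ M₂ S L := by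
    refine ⟨hchain1.append hchain2 hbridge, ?_, ?_⟩
    · rw [hL, List.cons_append]; rfl
    · rw [hL, ← List.append_assoc]; exact List.getLast?_concat
  have := hshort L hLpath
  rw [hL] at this
  simp only [List.length_append, List.length_cons, List.length_map, List.length_take,
    List.length_drop, List.length_singleton, List.length_nil, min_eq_left ha] at this
  omega

/-- Augmenting along a shortest `(s,t)`-path `s, v₁, …, v_{ℓ-1}, t` (adding the
odd-indexed and removing the even-indexed vertices) yields a common independent
set of size `|S| + 1`. Here `vs = [v₁, …, v_{ℓ-1}]`, so `vᵢ` has index `i - 1`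
in `vs`. -/
theorem augment_along_shortest_path {α : Type*} (M₁ M₂ : Matroid α)
    (hE : M₂.E = M₁.E) (hfin : M₁.E.Finite)
    (S : Set α) (hS₁ : M₁.Indep S) (hS₂ : M₂.Indep S)
    (vs : List α)
    (hpath : IsSTPath M₁ M₂ S
      (Sum.inr false :: (vs.map Sum.inl ++ [Sum.inr true])))
    (hshort : ∀ l : List (ExV α), IsSTPath M₁ M₂ S l → vs.length + 2 ≤ l.length) :
    M₁.Indep ((S ∪ {v | ∃ i, vs[i]? = some v ∧ i % 2 = 0}) \
        {v | ∃ i, vs[i]? = some v ∧ i % 2 = 1}) ∧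
    M₂.Indep ((S ∪ {v | ∃ i, vs[i]? = some v ∧ i % 2 = 0}) \
        {v | ∃ i, vs[i]? = some v ∧ i % 2 = 1}) ∧
    ((S ∪ {v | ∃ i, vs[i]? = some v ∧ i % 2 = 0}) \
        {v | ∃ i, vs[i]? = some v ∧ i % 2 = 1}).ncard = S.ncard + 1 := by
  classical
  obtain ⟨hchain, hhead, hlast⟩ := hpath
  obtain ⟨hE1, hE2, hE3⟩ := edges_of_chain hchain
  have hSfin : S.Finite := hfin.subset hS₁.subset_ground
  -- vs is nonempty
  have hn1 : 1 ≤ vs.length := by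
    by_contra h
    have hvs : vs = [] := List.eq_nil_of_length_eq_zero (by omega)
    subst hvs
    have := List.isChain_iff_getElem.1 hchain 0 (by simp)
    simp [exAdj] at this
  -- membership alternation
  have hmem : ∀ i, ∀ h : i < vs.length, (vs[i] ∈ S ↔ i % 2 = 1) := by
    intro i
    induction i with
    | zero => intro h; exact iff_of_false (hE1 h).1 (by omega)
    | succ i IH =>
      intro h
      have hi : i < vs.length := by omega
      rcases hE2 i h with ⟨hu, hv, -⟩ | ⟨hu, hv, -⟩
      · have := (IH hi).1 hu
        exact iff_of_false hv (by omega)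
      · have : ¬ (i % 2 = 1) := fun hh => hu ((IH hi).2 hh)
        exact iff_of_true hv (by omega)
  -- vs has odd length
  have hlastmem : vs[vs.length - 1] ∉ S := (hE3 (by omega)).1
  have hnodd : vs.length % 2 = 1 := by
    have h' : ¬ ((vs.length - 1) % 2 = 1) :=
      fun hh => hlastmem ((hmem (vs.length - 1) (by omega)).2 hh)
    omega
  set k : ℕ := vs.length / 2 with hk
  have hnk : vs.length = 2*k+1 := by omega
  -- index congruence helper
  have hvsc : ∀ (p q : ℕ) (hp : p < vs.length) (hq : q < vs.length),
      p = q → vs[p] = vs[q] := by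
    intro p q hp hq h; subst h; rfl
  -- positive edges
  have PE1 : M₁.Indep (insert vs[0] S) := (hE1 (by omega)).2
  have PE2 : ∀ i, ∀ h2i : 2*i+2 < vs.length,
      M₁.Indep (insert (vs[2*i+2]'(by omega)) (S \ {vs[2*i+1]'(by omega)})) := by
    intro i h
    rcases hE2 (2*i+1) h with ⟨-, -, hind⟩ | ⟨hu, -, -⟩
    · exact hind
    · exact absurd ((hmem (2*i+1) (by omega)).2 (by omega)) hu
  have PE3 : ∀ i, ∀ h2i : 2*i+1 < vs.length,
      M₂.Indep (insert (vs[2*i]'(by omega)) (S \ {vs[2*i+1]'(by omega)})) := by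
    intro i h
    rcases hE2 (2*i) h with ⟨hu, -, -⟩ | ⟨-, -, hind⟩
    · exact absurd ((hmem (2*i) (by omega)).1 hu) (by omega)
    · exact hind
  have PE4 : M₂.Indep (insert (vs[2*k]'(by omega)) S) := by
    rw [hvsc (2*k) (vs.length - 1) (by omega) (by omega) (by omega)]
    exact (hE3 (by omega)).2
  -- non-edges via shortest path
  have N1 : ∀ j, 1 ≤ j → ∀ hj2 : 2*j < vs.length, ¬ M₁.Indep (insert (vs[2*j]'(by omega)) S) := by
    intro j hj hjn hcon
    have hb := shortcut_le hshort hchain (a := 0) (b := 2*j) (by omega) (by omega) ?_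
    · omega
    intro x hx y hy
    simp only [List.take_zero, List.map_nil, List.getLast?_singleton,
      Option.mem_some_iff] at hx
    rw [head?_aux vs (2*j) (by omega)] at hy
    simp only [Option.mem_some_iff] at hy
    subst hx; subst hy
    exact ⟨fun hh => by have := (hmem (2*j) (by omega)).1 hh; omega, hcon⟩
  have N2 : ∀ i j, ∀ hi2 : 2*i+2 < vs.length, ∀ hj2 : 2*j < vs.length, i+2 ≤ j →
      ¬ M₁.Indep (insert (vs[2*j]'(by omega)) (S \ {vs[2*i+1]'(by omega)})) := by
    intro i j hi hj hij hcon
    have hb := shortcut_le hshort hchain (a := 2*i+2) (b := 2*j) (by omega) (by omega) ?_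
    · omega
    intro x hx y hy
    rw [getLast?_aux vs (2*i+2) (by omega) (by omega)] at hx
    rw [head?_aux vs (2*j) (by omega)] at hy
    simp only [Option.mem_some_iff] at hx hy
    subst hx; subst hy
    exact Or.inl ⟨(hmem (2*i+1) (by omega)).2 (by omega),
      fun hh => by have := (hmem (2*j) (by omega)).1 hh; omega, hcon⟩
  have N3 : ∀ j, ∀ hj2 : 2*j+1 < vs.length, ¬ M₂.Indep (insert (vs[2*j]'(by omega)) S) := by
    intro j hj hcon
    have hb := shortcut_le hshort hchain (a := 2*j+1) (b := vs.length)
      (by omega) (by omega) ?_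
    · omega
    intro x hx y hy
    rw [getLast?_aux vs (2*j+1) (by omega) (by omega)] at hx
    rw [List.drop_length] at hy
    simp only [List.map_nil, List.nil_append, List.head?_cons, Option.mem_some_iff] at hy
    simp only [Option.mem_some_iff] at hx
    subst hx; subst hy
    exact ⟨fun hh => by have := (hmem (2*j) (by omega)).1 hh; omega, hcon⟩
  have N4 : ∀ i j, ∀ hi2 : 2*i+1 < vs.length, ∀ hji : j < i,
      ¬ M₂.Indep (insert (vs[2*j]'(by omega)) (S \ {vs[2*i+1]'(by omega)})) := by
    intro i j hi hij hcon
    have hb := shortcut_le hshort hchain (a := 2*j+1) (b := 2*i+1) (by omega) (by omega) ?_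
    · omega
    intro x hx y hy
    rw [getLast?_aux vs (2*j+1) (by omega) (by omega)] at hx
    rw [head?_aux vs (2*i+1) (by omega)] at hy
    simp only [Option.mem_some_iff] at hx hy
    subst hx; subst hy
    exact Or.inr ⟨fun hh => by have := (hmem (2*j) (by omega)).1 hh; omega,
      (hmem (2*i+1) (by omega)).2 (by omega), hcon⟩
  -- no duplicate vertices
  have hne : ∀ p q, ∀ hpq : p < q, ∀ hq : q < vs.length, vs[p]'(by omega) ≠ vs[q] := by
    intro p q hpq hq heq
    have hb := shortcut_le hshort hchain (a := p+1) (b := q+1) (by omega) (by omega) ?_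
    · omega
    intro x hx y hy
    rw [getLast?_aux vs (p+1) (by omega) (by omega)] at hx
    simp only [Option.mem_some_iff] at hx
    subst hx
    by_cases hqn : q + 1 < vs.length
    · rw [head?_aux vs (q+1) (by omega)] at hy
      simp only [Option.mem_some_iff] at hy
      subst hy
      have := hE2 q hqn
      rw [show (vs[p+1-1]'(by omega) : α) = vs[q] from heq]
      exact this
    · have hq1 : q + 1 = vs.length := by omega
      rw [hq1, List.drop_length] at hy
      simp only [List.map_nil, List.nil_append, List.head?_cons, Option.mem_some_iff] at hy
      subst hy
      have := hE3 (by omega)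
      rwa [show (vs[vs.length-1]'(by omega) : α) = vs[p+1-1]'(by omega) from
        (heq.trans (hvsc q (vs.length - 1) (by omega) (by omega) (by omega))).symm] at this
  -- exchange functions
  have hlt0 : 0 < vs.length := by omega
  set o : ℕ → α := fun j => if h : 2*j < vs.length then vs[2*j] else vs[0] with ho'
  set e : ℕ → α := fun i => if h : 2*i+1 < vs.length then vs[2*i+1] else vs[0] with he'
  have ho : ∀ j, ∀ h : 2*j < vs.length, o j = vs[2*j] := fun j h => dif_pos h
  have hee : ∀ i, ∀ h : 2*i+1 < vs.length, e i = vs[2*i+1] := fun i h => dif_pos h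
  -- basic membership facts
  have hoSnot : ∀ j ≤ k, o j ∉ S := by
    intro j hj
    rw [ho j (by omega)]
    intro hh
    have := (hmem (2*j) (by omega)).1 hh
    omega
  have heSmem : ∀ i < k, e i ∈ S := by
    intro i hi
    rw [hee i (by omega)]
    exact (hmem (2*i+1) (by omega)).2 (by omega)
  have hoE1 : ∀ j ≤ k, o j ∈ M₁.E := by
    intro j hjk
    rw [ho j (by omega)]
    rcases Nat.eq_zero_or_pos j with rfl | hj
    · exact PE1.subset_ground (mem_insert _ _)
    · obtain ⟨j', rfl⟩ : ∃ j', j = j'+1 := ⟨j-1, by omega⟩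
      exact (PE2 j' (by omega)).subset_ground (mem_insert _ _)
  have hoE2 : ∀ j ≤ k, o j ∈ M₂.E := by
    intro j hj; rw [hE]; exact hoE1 j hj
  have heinj : ∀ i < k, ∀ i' < k, e i = e i' → i = i' := by
    intro i hi i' hi' hieq
    rw [hee i (by omega), hee i' (by omega)] at hieq
    by_contra hne'
    rcases Nat.lt_or_ge i i' with h | h
    · exact hne (2*i+1) (2*i'+1) (by omega) (by omega) hieq
    · exact hne (2*i'+1) (2*i+1) (by omega) (by omega) hieq.symm
  have hoinj : ∀ j ≤ k, ∀ j' ≤ k, o j = o j' → j = j' := by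
    intro j hj j' hj' hjeq
    rw [ho j (by omega), ho j' (by omega)] at hjeq
    by_contra hne'
    rcases Nat.lt_or_ge j j' with h | h
    · exact hne (2*j) (2*j') (by omega) (by omega) hjeq
    · exact hne (2*j') (2*j) (by omega) (by omega) hjeq.symm
  -- hypotheses for the M₁ application
  have h01 : M₁.Indep (insert (o 0) S) := by
    rw [ho 0 (by omega)]; exact PE1
  have hex1 : ∀ i < k, M₁.Indep (insert (o (i+1)) (S \ {e i})) := by
    intro i hi
    rw [ho (i+1) (by omega), hee i (by omega)]
    exact PE2 i (by omega)
  have hdep1 : ∀ j, 1 ≤ j → j ≤ k → o j ∈ M₁.closure S := by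
    intro j h1 h2
    have hnm : o j ∉ S := hoSnot j h2
    have hg : o j ∈ M₁.E := hoE1 j h2
    by_contra hcl
    have := (hS₁.notMem_closure_iff_of_notMem hnm hg).1 hcl
    rw [ho j (by omega)] at this
    exact N1 j h1 (by omega) this
  have hskip1 : ∀ i j, i < k → j ≤ k → i + 2 ≤ j → o j ∈ M₁.closure (S \ {e i}) := by
    intro i j hi hj hij
    have hind : M₁.Indep (S \ {e i}) := hS₁.subset diff_subset
    have hnm : o j ∉ S \ {e i} := fun hh => hoSnot j hj hh.1
    have hg : o j ∈ M₁.E := hoE1 j hj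
    by_contra hcl
    have := (hind.notMem_closure_iff_of_notMem hnm hg).1 hcl
    rw [ho j (by omega), hee i (by omega)] at this
    exact N2 i j (by omega) (by omega) hij this
  obtain ⟨hind1, hcard1⟩ := keyIndep M₁ S hS₁ hSfin k e o heSmem hoSnot hoE1
    heinj hoinj h01 hex1 hdep1 hskip1
  -- hypotheses for the M₂ application (reversed orientation)
  set e2 : ℕ → α := fun i => e (k-1-i) with he2
  set o2 : ℕ → α := fun j => o (k-j) with ho2
  have h02 : M₂.Indep (insert (o2 0) S) := by
    show M₂.Indep (insert (o (k-0)) S)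
    rw [show k - 0 = k from rfl, ho k (by omega)]
    exact PE4
  have hex2 : ∀ i < k, M₂.Indep (insert (o2 (i+1)) (S \ {e2 i})) := by
    intro i hi
    show M₂.Indep (insert (o (k-(i+1))) (S \ {e (k-1-i)}))
    rw [ho (k-(i+1)) (by omega), hee (k-1-i) (by omega),
      hvsc (2*(k-(i+1))) (2*(k-1-i)) (by omega) (by omega) (by omega)]
    exact PE3 (k-1-i) (by omega)
  have hdep2 : ∀ j, 1 ≤ j → j ≤ k → o2 j ∈ M₂.closure S := by
    intro j h1 h2
    have hnm : o2 j ∉ S := hoSnot (k-j) (by omega)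
    have hg : o2 j ∈ M₂.E := hoE2 (k-j) (by omega)
    by_contra hcl
    have := (hS₂.notMem_closure_iff_of_notMem hnm hg).1 hcl
    rw [show o2 j = o (k-j) from rfl, ho (k-j) (by omega)] at this
    exact N3 (k-j) (by omega) this
  have hskip2 : ∀ i j, i < k → j ≤ k → i + 2 ≤ j → o2 j ∈ M₂.closure (S \ {e2 i}) := by
    intro i j hi hj hij
    have hind : M₂.Indep (S \ {e2 i}) := hS₂.subset diff_subset
    have hnm : o2 j ∉ S \ {e2 i} := fun hh => hoSnot (k-j) (by omega) hh.1
    have hg : o2 j ∈ M₂.E := hoE2 (k-j) (by omega)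
    by_contra hcl
    have := (hind.notMem_closure_iff_of_notMem hnm hg).1 hcl
    rw [show o2 j = o (k-j) from rfl, show e2 i = e (k-1-i) from rfl,
      ho (k-j) (by omega), hee (k-1-i) (by omega)] at this
    exact N4 (k-1-i) (k-j) (by omega) (by omega) this
  obtain ⟨hind2, hcard2⟩ := keyIndep M₂ S hS₂ hSfin k e2 o2
    (fun i hi => heSmem (k-1-i) (by omega))
    (fun j hj => hoSnot (k-j) (by omega))
    (fun j hj => hoE2 (k-j) (by omega))
    (fun i hi i' hi' hq => by
      have := heinj (k-1-i) (by omega) (k-1-i') (by omega) hq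
      omega)
    (fun j hj j' hj' hq => by
      have := hoinj (k-j) (by omega) (k-j') (by omega) hq
      omega)
    h02 hex2 hdep2 hskip2
  -- identify the sets
  have hOset : {v | ∃ i, vs[i]? = some v ∧ i % 2 = 0} = {a | ∃ j ≤ k, o j = a} := by
    ext a
    constructor
    · rintro ⟨i, hsome, hpar⟩
      obtain ⟨hi, rfl⟩ := List.getElem?_eq_some_iff.1 hsome
      refine ⟨i/2, by omega, ?_⟩
      rw [ho (i/2) (by omega)]
      exact hvsc (2*(i/2)) i (by omega) (by omega) (by omega)
    · rintro ⟨j, hj, rfl⟩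
      refine ⟨2*j, List.getElem?_eq_some_iff.2 ⟨by omega, ?_⟩, by omega⟩
      rw [ho j (by omega)]
  have hEset : {v | ∃ i, vs[i]? = some v ∧ i % 2 = 1} = {a | ∃ i < k, e i = a} := by
    ext a
    constructor
    · rintro ⟨i, hsome, hpar⟩
      obtain ⟨hi, rfl⟩ := List.getElem?_eq_some_iff.1 hsome
      refine ⟨i/2, by omega, ?_⟩
      rw [hee (i/2) (by omega)]
      exact hvsc (2*(i/2)+1) i (by omega) (by omega) (by omega)
    · rintro ⟨i, hi, rfl⟩
      refine ⟨2*i+1, List.getElem?_eq_some_iff.2 ⟨by omega, ?_⟩, by omega⟩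
      rw [hee i (by omega)]
  have hmain : (S ∪ {v | ∃ i, vs[i]? = some v ∧ i % 2 = 0}) \
      {v | ∃ i, vs[i]? = some v ∧ i % 2 = 1}
      = (S \ {a | ∃ i < k, e i = a}) ∪ {a | ∃ j ≤ k, o j = a} := by
    rw [hOset, hEset]
    ext a
    simp only [mem_diff, mem_union, mem_setOf_eq]
    constructor
    · rintro ⟨hS' | hO', hnE⟩
      · exact Or.inl ⟨hS', hnE⟩
      · exact Or.inr hO'
    · rintro (⟨hS', hnE⟩ | hO')
      · exact ⟨Or.inl hS', hnE⟩
      · refine ⟨Or.inr hO', ?_⟩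
        rintro ⟨i, hik, hq⟩
        obtain ⟨j, hj, rfl⟩ := hO'
        exact hoSnot j hj (hq ▸ heSmem i hik)
  have hmain2 : (S \ {a | ∃ i < k, e2 i = a}) ∪ {a | ∃ j ≤ k, o2 j = a}
      = (S \ {a | ∃ i < k, e i = a}) ∪ {a | ∃ j ≤ k, o j = a} := by
    have h1 : {a | ∃ i < k, e2 i = a} = {a | ∃ i < k, e i = a} := by
      ext a
      constructor
      · rintro ⟨i, hi, rfl⟩; exact ⟨k-1-i, by omega, rfl⟩
      · rintro ⟨i, hi, rfl⟩
        refine ⟨k-1-i, by omega, ?_⟩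
        show e (k-1-(k-1-i)) = e i
        congr 1
        omega
    have h2 : {a | ∃ j ≤ k, o2 j = a} = {a | ∃ j ≤ k, o j = a} := by
      ext a
      constructor
      · rintro ⟨j, hj, rfl⟩; exact ⟨k-j, by omega, rfl⟩
      · rintro ⟨j, hj, rfl⟩
        refine ⟨k-j, by omega, ?_⟩
        show o (k-(k-j)) = o j
        congr 1
        omega
    rw [h1, h2]
  rw [hmain]
  refine ⟨hind1, by rw [← hmain2]; exact hind2, ?_⟩
  rw [Set.ncard_def, hcard1, Set.ncard_def,
    ENat.toNat_add (by rw [Set.encard_ne_top_iff]; exact hSfin) (by simp)]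
  rfl
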